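/- Let f be a homeomorphism of the plane, ≤ a partial order on the set B of bricks of a free brick decomposition with no cycles (b ≤ b' iff there is a chain b = b₀, …, b_n = b' with f(b_j) ∩ b_{j+1} ≠ ∅). Suppose the map φ₊ sends connected subsets of B (in the adjacency graph) to connected subsets, and that there exists a brick b' adjacent to b with f(b) ∩ b' ≠ ∅. Then both b_{≥} = {c : c ≥ b} and b_{>} = {c : c > b} are connected subsets of the adjacency graph. -/

import Mathlib

/-- A subset `X` of a graph `(B, adj)` is connected if any two of its elements
are joined by a path of adjacent elements staying in `X`. -/
def GraphConn {B : Type*} (adj : B → B → Prop) (X : Set B) : Prop :=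
  ∀ a ∈ X, ∀ b ∈ X, Relation.ReflTransGen (fun x y => adj x y ∧ x ∈ X ∧ y ∈ X) a b

/-- Let `≤` be the cycle-free order on bricks induced by `φ₊` and suppose `φ₊`
sends connected sets to connected sets. If there exists a brick `b'` adjacent to
`b` with `b' ∈ φ₊({b})`, then both `b_{≥} = ⋃_{n≥0} φ₊ⁿ({b})` and
`b_{>} = ⋃_{n≥1} φ₊ⁿ({b})` are connected subsets of the adjacency graph. -/
theorem geq_and_gt_connected {B : Type*} (adj : B → B → Prop)
    (hsymm : Symmetric adj) (hirr : ∀ b, ¬ adj b b)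
    (φ : Set B → Set B)
    (hunion : ∀ {J : Type} (X : J → Set B), φ (⋃ j, X j) = ⋃ j, φ (X j))
    (hconn : ∀ X : Set B, GraphConn adj X → GraphConn adj (φ X))
    (le : B → B → Prop)
    (hle : ∀ b b', le b b' ↔ b' ∈ ⋃ n : ℕ, φ^[n] {b})
    (hnocycle : ∀ b b', le b b' → le b' b → b = b')
    (b : B) (hreg : ∃ b', adj b b' ∧ b' ∈ φ {b}) :
    GraphConn adj (⋃ n : ℕ, φ^[n] {b}) ∧ GraphConn adj (⋃ n : ℕ, φ^[n + 1] {b}) := by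
  classical
  obtain ⟨b', hadj, hb'⟩ := hreg
  -- φ ∅ = ∅
  have hempty : φ ∅ = ∅ := by
    have h := hunion (fun _ : Empty => (∅ : Set B))
    simpa using h
  -- φ of a binary union
  have hbin : ∀ X Y : Set B, φ (X ∪ Y) = φ X ∪ φ Y := by
    intro X Y
    have h := hunion (fun j : Bool => bif j then X else Y)
    have h1 : (⋃ j : Bool, bif j then X else Y) = X ∪ Y := by
      ext x; simp [Set.mem_iUnion, Bool.exists_bool, or_comm]
    have h2 : (⋃ j : Bool, φ (bif j then X else Y)) = φ X ∪ φ Y := by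
      ext x; simp [Set.mem_iUnion, Bool.exists_bool, or_comm]
    rw [h1, h2] at h
    exact h
  -- the singleton {b} is connected
  have hsing : GraphConn adj ({b} : Set B) := by
    intro a ha c hc
    simp only [Set.mem_singleton_iff] at ha hc
    subst ha; subst hc
    exact Relation.ReflTransGen.refl
  have hφb : GraphConn adj (φ {b}) := hconn _ hsing
  set S : Set B := {b} ∪ φ {b} with hS
  have hbS : b ∈ S := Or.inl rfl
  have hb'S : b' ∈ S := Or.inr hb'
  -- every point of S connects to b within S
  have keyS : ∀ x ∈ S, Relation.ReflTransGen
      (fun x y => adj x y ∧ x ∈ S ∧ y ∈ S) x b := by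
    intro x hx
    rcases hx with hx | hx
    · rw [Set.mem_singleton_iff] at hx; subst hx; exact Relation.ReflTransGen.refl
    · have p := hφb x hx b' hb'
      have p' : Relation.ReflTransGen (fun x y => adj x y ∧ x ∈ S ∧ y ∈ S) x b' :=
        Relation.ReflTransGen.mono (fun u v ⟨h1, h2, h3⟩ => ⟨h1, Or.inr h2, Or.inr h3⟩) _ _ p
      exact p'.tail ⟨hsymm hadj, hb'S, hbS⟩
  have hSconn : GraphConn adj S := by
    intro a ha c hc
    have hsym : Symmetric (fun x y => adj x y ∧ x ∈ S ∧ y ∈ S) :=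
      fun u v ⟨h1, h2, h3⟩ => ⟨hsymm h1, h3, h2⟩
    exact (keyS a ha).trans (@Std.Symm.symm _ _ (@Relation.ReflTransGen.stdSymm _ _ ⟨hsym⟩) _ _ (keyS c hc))
  -- iterates of S are connected
  have hAconn : ∀ n : ℕ, GraphConn adj (φ^[n] S) := by
    intro n
    induction n with
    | zero => simpa using hSconn
    | succ n ih =>
      rw [Function.iterate_succ_apply']
      exact hconn _ ih
  -- iterates of S decompose
  have hAeq : ∀ n : ℕ, φ^[n] S = φ^[n] {b} ∪ φ^[n + 1] {b} := by
    intro n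
    induction n with
    | zero => simp [hS]
    | succ n ih =>
      rw [Function.iterate_succ_apply', ih, hbin,
        ← Function.iterate_succ_apply' φ n, ← Function.iterate_succ_apply' φ (n + 1)]
  set U : Set B := ⋃ n : ℕ, φ^[n] {b} with hU
  have hsubU : ∀ n : ℕ, φ^[n] S ⊆ U := by
    intro n
    rw [hAeq n]
    exact Set.union_subset (Set.subset_iUnion (fun n => φ^[n] {b}) n)
      (Set.subset_iUnion (fun n => φ^[n] {b}) (n + 1))
  -- every point of φ^[n] {b} connects to b within U
  have key : ∀ n : ℕ, ∀ x ∈ φ^[n] {b}, Relation.ReflTransGen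
      (fun x y => adj x y ∧ x ∈ U ∧ y ∈ U) x b := by
    intro n
    induction n with
    | zero =>
      intro x hx
      simp only [Function.iterate_zero, id, Set.mem_singleton_iff] at hx
      subst hx; exact Relation.ReflTransGen.refl
    | succ n ih =>
      intro x hx
      have hne : (φ^[n] {b}).Nonempty := by
        by_contra h
        rw [Set.not_nonempty_iff_eq_empty] at h
        rw [Function.iterate_succ_apply', h, hempty] at hx
        exact hx
      obtain ⟨y, hy⟩ := hne
      have hxA : x ∈ φ^[n] S := by rw [hAeq n]; exact Or.inr hx
      have hyA : y ∈ φ^[n] S := by rw [hAeq n]; exact Or.inl hy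
      have p := hAconn n x hxA y hyA
      have p' : Relation.ReflTransGen (fun x y => adj x y ∧ x ∈ U ∧ y ∈ U) x y :=
        Relation.ReflTransGen.mono (fun u v ⟨h1, h2, h3⟩ => ⟨h1, hsubU n h2, hsubU n h3⟩) _ _ p
      exact p'.trans (ih y hy)
  have hsymU : Symmetric (fun x y => adj x y ∧ x ∈ U ∧ y ∈ U) :=
    fun u v ⟨h1, h2, h3⟩ => ⟨hsymm h1, h3, h2⟩
  have hUconn : GraphConn adj U := by
    intro a ha c hc
    rw [hU, Set.mem_iUnion] at ha hc
    obtain ⟨n, ha⟩ := ha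
    obtain ⟨m, hc⟩ := hc
    exact (key n a ha).trans (@Std.Symm.symm _ _ (@Relation.ReflTransGen.stdSymm _ _ ⟨hsymU⟩) _ _ (key m c hc))
  have hVeq : (⋃ n : ℕ, φ^[n + 1] {b}) = φ U := by
    rw [hU, hunion (fun n : ℕ => φ^[n] {b})]
    apply Set.iUnion_congr
    intro n
    rw [Function.iterate_succ_apply']
  refine ⟨hUconn, ?_⟩
  rw [hVeq]
  exact hconn _ hUconn
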